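/- Let H(n,ρ) be the random 3-uniform hypergraph on vertex set [n] where each 3-element subset is an edge independently with probability ρ ≤ 48c/n² for a constant c. Let K > 0 be a constant. Then the expected number of vertex subsets of size k, 4 ≤ k ≤ K log n, spanning at least ⌈3k/5⌉ edges, summed over all such k, tends to 0 as n → ∞, provided c is sufficiently small. Consequently, a.a.s. no set of k vertices with 4 ≤ k ≤ K log n spans ⌈3k/5⌉ or more edges. -/

import Mathlib

open MeasureTheory Filter

/-- The random 3-uniform hypergraph `H(n,ρ)`: each 3-element subset of `Fin n` is an edge
independently with probability `ρ`; a sample point records for each such subset whether it is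
an edge. -/
noncomputable def hypMeasure (n : ℕ) (ρ : ENNReal) (hρ : ρ ≤ 1) :
    Measure ({T : Finset (Fin n) // T.card = 3} → Bool) :=
  Measure.pi fun _ => (PMF.bernoulli ρ.toNNReal (by simpa using ENNReal.toNNReal_mono ENNReal.one_ne_top hρ)).toMeasure

/-- The number of edges of the hypergraph `ω` spanned by the vertex set `S`. -/
def spanCount {n : ℕ} (S : Finset (Fin n)) (ω : {T : Finset (Fin n) // T.card = 3} → Bool) : ℕ :=
  (Finset.univ.filter fun T : {T : Finset (Fin n) // T.card = 3} => T.1 ⊆ S ∧ ω T = true).card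

instance hypMeasure.instIsProbabilityMeasure (n : ℕ) (ρ : ENNReal) (hρ : ρ ≤ 1) :
    IsProbabilityMeasure (hypMeasure n ρ hρ) := by
  unfold hypMeasure; infer_instance

lemma triples_card {n : ℕ} (S : Finset (Fin n)) :
    (Finset.univ.filter fun T : {T : Finset (Fin n) // T.card = 3} => T.1 ⊆ S).card
      = S.card.choose 3 := by
  rw [← Finset.card_powersetCard 3 S]
  apply Finset.card_bij (fun T _ => T.1)
  · intro T hT
    simp only [Finset.mem_filter, Finset.mem_univ, true_and] at hT
    simp [Finset.mem_powersetCard, hT, T.2]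
  · intro a ha b hb h; exact Subtype.ext h
  · intro b hb
    rw [Finset.mem_powersetCard] at hb
    exact ⟨⟨b, hb.2⟩, by simp [hb.1], rfl⟩

lemma cyl_measure {n : ℕ} (ρ : ENNReal) (hρ : ρ ≤ 1)
    (E : Finset {T : Finset (Fin n) // T.card = 3}) :
    hypMeasure n ρ hρ {ω | ∀ T ∈ E, ω T = true} = ρ ^ E.card := by
  have h1 : {ω : {T : Finset (Fin n) // T.card = 3} → Bool | ∀ T ∈ E, ω T = true}
      = Set.pi Set.univ (fun T => if T ∈ E then {true} else Set.univ) := by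
    ext ω
    simp only [Set.mem_setOf_eq, Set.mem_pi, Set.mem_univ, true_implies]
    constructor
    · intro h T; split <;> simp_all
    · intro h T hT; have := h T; simp [hT] at this; exact this
  rw [h1, hypMeasure, Measure.pi_pi]
  have h2 : ∀ T : {T : Finset (Fin n) // T.card = 3},
      (PMF.bernoulli ρ.toNNReal (by simpa using ENNReal.toNNReal_mono ENNReal.one_ne_top hρ)).toMeasure (if T ∈ E then {true} else Set.univ)
        = if T ∈ E then ρ else 1 := by
    intro T
    split
    · rw [PMF.toMeasure_apply_singleton _ _ (measurableSet_singleton _)]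
      simp only [PMF.bernoulli, PMF.ofFintype_apply]
      exact ENNReal.coe_toNNReal (ne_top_of_le_ne_top ENNReal.one_ne_top hρ)
    · rw [measure_univ]
  simp_rw [h2]
  rw [Finset.prod_ite_mem Finset.univ E (fun _ => ρ)]
  simp [Finset.univ_inter]

lemma prob_ge_le {n : ℕ} (ρ : ENNReal) (hρ : ρ ≤ 1) (S : Finset (Fin n)) (m : ℕ) :
    hypMeasure n ρ hρ {ω | m ≤ spanCount S ω} ≤
      ((S.card.choose 3).choose m : ENNReal) * ρ ^ m := by
  set triples := Finset.univ.filter fun T : {T : Finset (Fin n) // T.card = 3} => T.1 ⊆ S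
  have hsub : {ω : {T : Finset (Fin n) // T.card = 3} → Bool | m ≤ spanCount S ω}
      ⊆ ⋃ E ∈ triples.powersetCard m, {ω | ∀ T ∈ E, ω T = true} := by
    intro ω hω
    simp only [Set.mem_setOf_eq, spanCount] at hω
    obtain ⟨E, hE1, hE2⟩ := Finset.exists_subset_card_eq hω
    have hEmem : E ∈ triples.powersetCard m := by
      rw [Finset.mem_powersetCard]
      refine ⟨fun x hx => ?_, hE2⟩
      have := hE1 hx
      simp only [Finset.mem_filter, triples] at this ⊢
      exact ⟨this.1, this.2.1⟩
    refine Set.mem_biUnion hEmem ?_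
    intro T hT
    have := hE1 hT
    simp only [Finset.mem_filter] at this
    exact this.2.2
  calc hypMeasure n ρ hρ {ω | m ≤ spanCount S ω}
      ≤ hypMeasure n ρ hρ (⋃ E ∈ triples.powersetCard m, {ω | ∀ T ∈ E, ω T = true}) :=
        measure_mono hsub
    _ ≤ ∑ E ∈ triples.powersetCard m, hypMeasure n ρ hρ {ω | ∀ T ∈ E, ω T = true} :=
        measure_biUnion_finset_le _ _
    _ = ∑ E ∈ triples.powersetCard m, ρ ^ E.card := by
        simp_rw [cyl_measure]
    _ = ((S.card.choose 3).choose m : ENNReal) * ρ ^ m := by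
        rw [Finset.sum_congr rfl (fun E hE => by
          rw [(Finset.mem_powersetCard.mp hE).2]), Finset.sum_const,
          Finset.card_powersetCard, triples_card, nsmul_eq_mul]

/-- Real-valued bound for the sum over sets `S` of size `k`. -/
lemma ssum_bound (n k : ℕ) (ρ : ENNReal) (hρ : ρ ≤ 1) :
    ∑ S ∈ (Finset.univ : Finset (Finset (Fin n))).filter (fun S => S.card = k),
        ((hypMeasure n ρ hρ) {ω | (3 * k + 4) / 5 ≤ spanCount S ω}).toReal
      ≤ (n:ℝ)^k * (k:ℝ)^(3*((3*k+4)/5)) * ρ.toReal^((3*k+4)/5) := by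
  set m := (3*k+4)/5 with hm
  have hρtop : ρ ≠ ⊤ := ne_top_of_le_ne_top ENNReal.one_ne_top hρ
  have hterm : ∀ S ∈ (Finset.univ : Finset (Finset (Fin n))).filter (fun S => S.card = k),
      ((hypMeasure n ρ hρ) {ω | m ≤ spanCount S ω}).toReal
        ≤ ((k.choose 3).choose m : ℝ) * ρ.toReal^m := by
    intro S hS
    have hcard : S.card = k := (Finset.mem_filter.mp hS).2
    have h1 := prob_ge_le ρ hρ S m
    rw [hcard] at h1
    have h2 : (((k.choose 3).choose m : ENNReal) * ρ ^ m) ≠ ⊤ :=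
      ENNReal.mul_ne_top (ENNReal.natCast_ne_top _) (ENNReal.pow_ne_top hρtop)
    calc ((hypMeasure n ρ hρ) {ω | m ≤ spanCount S ω}).toReal
        ≤ (((k.choose 3).choose m : ENNReal) * ρ ^ m).toReal := ENNReal.toReal_mono h2 h1
      _ = ((k.choose 3).choose m : ℝ) * ρ.toReal^m := by
          simp [ENNReal.toReal_mul, ENNReal.toReal_pow]
  have hcardfilter : ((Finset.univ : Finset (Finset (Fin n))).filter
      (fun S => S.card = k)).card = n.choose k := by
    rw [← Finset.powerset_univ, ← Finset.powersetCard_eq_filter,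
      Finset.card_powersetCard, Finset.card_univ, Fintype.card_fin]
  calc ∑ S ∈ (Finset.univ : Finset (Finset (Fin n))).filter (fun S => S.card = k),
        ((hypMeasure n ρ hρ) {ω | m ≤ spanCount S ω}).toReal
      ≤ ((Finset.univ : Finset (Finset (Fin n))).filter (fun S => S.card = k)).card
          • (((k.choose 3).choose m : ℝ) * ρ.toReal^m) :=
        Finset.sum_le_card_nsmul _ _ _ hterm
    _ = (n.choose k : ℝ) * (((k.choose 3).choose m : ℝ) * ρ.toReal^m) := by
        rw [hcardfilter, nsmul_eq_mul]
    _ ≤ (n:ℝ)^k * ((k:ℝ)^(3*m) * ρ.toReal^m) := by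
        apply mul_le_mul
        · exact_mod_cast Nat.choose_le_pow n k
        · apply mul_le_mul_of_nonneg_right _ (pow_nonneg ENNReal.toReal_nonneg m)
          calc ((k.choose 3).choose m : ℝ) ≤ ((k.choose 3 : ℕ)^m : ℝ) := by
                exact_mod_cast Nat.choose_le_pow (k.choose 3) m
            _ ≤ ((k^3)^m : ℕ) := by
                exact_mod_cast Nat.pow_le_pow_left (Nat.choose_le_pow k 3) m
            _ = (k:ℝ)^(3*m) := by push_cast; rw [← pow_mul]
        · positivity
        · positivity
    _ = (n:ℝ)^k * (k:ℝ)^(3*m) * ρ.toReal^m := by ring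

lemma logpow_rpow_tendsto (p : ℕ) (s : ℝ) (hs : 0 < s) :
    Tendsto (fun n : ℕ => Real.log n ^ p * (n:ℝ) ^ (-s)) atTop (nhds 0) := by
  have h0 : Tendsto (fun x:ℝ => Real.log x ^ (p:ℝ) / x ^ s) atTop (nhds 0) :=
    (isLittleO_log_rpow_rpow_atTop p hs).tendsto_div_nhds_zero
  have h1 : Tendsto (fun x:ℝ => Real.log x ^ p * x ^ (-s)) atTop (nhds 0) := by
    apply h0.congr'
    filter_upwards [eventually_ge_atTop (1:ℝ)] with x hx
    have hx0 : (0:ℝ) < x := by linarith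
    rw [← Real.rpow_natCast (Real.log x) p, div_eq_mul_inv, ← Real.rpow_neg hx0.le]
  exact h1.comp tendsto_natCast_atTop_atTop

/-- The per-`k` numeric bound. -/
lemma perK_bound (c K L : ℝ) (hc : 0 < c) (n k : ℕ) (hn : 3 ≤ n)
    (hk4 : 4 ≤ k) (hkK : (k:ℝ) ≤ K * L) :
    (n:ℝ)^k * (k:ℝ)^(3*((3*k+4)/5)) * (48*c/(n:ℝ)^2)^((3*k+4)/5)
      ≤ (max 1 (48*c*(K*L)^3) * (n:ℝ) ^ (-(1:ℝ)/5))^k := by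
  set m := (3*k+4)/5 with hm
  set A := max 1 (48*c*(K*L)^3) with hA
  have hm1 : 3*k ≤ 5*m := by omega
  have hm2 : m ≤ k := by omega
  have hn1 : (1:ℝ) ≤ (n:ℝ) := by exact_mod_cast Nat.one_le_of_lt hn
  have hn0 : (0:ℝ) < (n:ℝ) := by linarith
  have hA1 : (1:ℝ) ≤ A := le_max_left _ _
  have hk0 : (0:ℝ) ≤ (k:ℝ) := Nat.cast_nonneg k
  have step1 : (48*c*(k:ℝ)^3)^m ≤ A^k := by
    have hbase : 48*c*(k:ℝ)^3 ≤ A := by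
      refine le_trans ?_ (le_max_right _ _)
      have : (k:ℝ)^3 ≤ (K*L)^3 := pow_le_pow_left₀ hk0 hkK 3
      nlinarith
    calc (48*c*(k:ℝ)^3)^m ≤ A^m := pow_le_pow_left₀ (by positivity) hbase m
      _ ≤ A^k := pow_le_pow_right₀ hA1 hm2
  have step2 : (n:ℝ)^k / (n:ℝ)^(2*m) ≤ ((n:ℝ) ^ (-(1:ℝ)/5))^k := by
    have e1 : (n:ℝ)^k / (n:ℝ)^(2*m) = (n:ℝ) ^ ((k:ℝ) - (2*m : ℕ)) := by
      rw [Real.rpow_sub hn0, Real.rpow_natCast, Real.rpow_natCast]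
    have e2 : ((n:ℝ) ^ (-(1:ℝ)/5))^k = (n:ℝ) ^ ((-(1:ℝ)/5) * k) := by
      rw [← Real.rpow_natCast ((n:ℝ) ^ (-(1:ℝ)/5)) k, ← Real.rpow_mul (le_of_lt hn0)]
    rw [e1, e2]
    apply Real.rpow_le_rpow_of_exponent_le hn1
    have : (3:ℝ)*k ≤ 5*m := by exact_mod_cast hm1
    push_cast
    linarith
  have expand : (n:ℝ)^k * (k:ℝ)^(3*m) * (48*c/(n:ℝ)^2)^m
      = (48*c*(k:ℝ)^3)^m * ((n:ℝ)^k / (n:ℝ)^(2*m)) := by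
    rw [div_pow, ← pow_mul (n:ℝ) 2 m]
    field_simp
    ring
  rw [expand, mul_pow A]
  exact mul_le_mul step1 step2 (by positivity) (by positivity)

/-- Consider `H(n,ρ)` with `ρ = 48c/n²`.  For sufficiently small `c > 0` and
any constant `K > 0`, the expected number of vertex subsets of size `k`, `4 ≤ k ≤ K log n`,
spanning at least `⌈3k/5⌉` edges (summed over all such `k`) tends to `0` as `n → ∞`;
consequently a.a.s. no set of `k` vertices with `4 ≤ k ≤ K log n` spans `⌈3k/5⌉` or more edges.
(Here `(3k+4)/5` is natural-number division, which equals `⌈3k/5⌉`.) -/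
theorem stmt_13 : ∃ c₀ : ℝ, 0 < c₀ ∧ ∀ c : ℝ, 0 < c → c ≤ c₀ → ∀ K : ℝ, 0 < K →
    (Tendsto (fun n : ℕ =>
      ∑ k ∈ Finset.Icc 4 ⌊K * Real.log n⌋₊,
        ∑ S ∈ (Finset.univ : Finset (Finset (Fin n))).filter (fun S => S.card = k),
          ((hypMeasure n (min (ENNReal.ofReal (48 * c / (n : ℝ) ^ 2)) 1) (min_le_right _ _))
            {ω | (3 * k + 4) / 5 ≤ spanCount S ω}).toReal)
      atTop (nhds 0)) ∧
    (Tendsto (fun n : ℕ =>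
      ((hypMeasure n (min (ENNReal.ofReal (48 * c / (n : ℝ) ^ 2)) 1) (min_le_right _ _))
        {ω | ∃ k ∈ Finset.Icc 4 ⌊K * Real.log n⌋₊, ∃ S : Finset (Fin n),
          S.card = k ∧ (3 * k + 4) / 5 ≤ spanCount S ω}).toReal)
      atTop (nhds 0)) := by
  refine ⟨1, one_pos, fun c hc _hc1 K hK => ?_⟩
  set D : ℝ := 48 * c * K ^ 3 with hD
  have hD0 : 0 ≤ D := by positivity
  set Cst : ℝ := (K + 1) * (1 + D)^4 with hCst
  set ρf : ℕ → ENNReal := fun n => min (ENNReal.ofReal (48 * c / (n : ℝ) ^ 2)) 1 with hρf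
  set f : ℕ → ℝ := fun n =>
      ∑ k ∈ Finset.Icc 4 ⌊K * Real.log n⌋₊,
        ∑ S ∈ (Finset.univ : Finset (Finset (Fin n))).filter (fun S => S.card = k),
          ((hypMeasure n (ρf n) (min_le_right _ _))
            {ω | (3 * k + 4) / 5 ≤ spanCount S ω}).toReal with hf
  have hf_nonneg : ∀ n, 0 ≤ f n := fun n =>
    Finset.sum_nonneg fun k _ => Finset.sum_nonneg fun S _ => ENNReal.toReal_nonneg
  have hg : Tendsto (fun n : ℕ => Cst * (Real.log n ^ (13:ℕ) * (n:ℝ) ^ (-(4:ℝ)/5)))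
      atTop (nhds 0) := by
    have := (logpow_rpow_tendsto 13 (4/5) (by norm_num)).const_mul Cst
    simpa [neg_div] using this
  have hBtend : Tendsto (fun n : ℕ =>
      (n:ℝ) ^ (-(1:ℝ)/5) + D * (Real.log n ^ (3:ℕ) * (n:ℝ) ^ (-(1:ℝ)/5))) atTop (nhds 0) := by
    have t1 := logpow_rpow_tendsto 0 (1/5) (by norm_num)
    have t2 := (logpow_rpow_tendsto 3 (1/5) (by norm_num)).const_mul D
    have := t1.add t2
    simpa [neg_div] using this
  have hBev : ∀ᶠ n : ℕ in atTop,
      max 1 (48*c*(K*Real.log n)^3) * (n:ℝ) ^ (-(1:ℝ)/5) ≤ 1 := by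
    filter_upwards [hBtend.eventually_lt_const one_pos, eventually_ge_atTop 3] with n h1 hn3
    have hL0 : 0 ≤ Real.log n := Real.log_nonneg (by exact_mod_cast Nat.one_le_of_lt hn3)
    have hr0 : (0:ℝ) ≤ (n:ℝ) ^ (-(1:ℝ)/5) := Real.rpow_nonneg (Nat.cast_nonneg n) _
    have hDL : (0:ℝ) ≤ D * Real.log n ^ 3 := mul_nonneg hD0 (pow_nonneg hL0 3)
    have hmax : max 1 (48*c*(K*Real.log n)^3) ≤ 1 + D * Real.log n ^ 3 := by
      apply max_le
      · linarith
      · have : 48*c*(K*Real.log n)^3 = D * Real.log n ^ 3 := by rw [hD]; ring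
        rw [this]; linarith
    calc max 1 (48*c*(K*Real.log n)^3) * (n:ℝ) ^ (-(1:ℝ)/5)
        ≤ (1 + D * Real.log n ^ 3) * (n:ℝ) ^ (-(1:ℝ)/5) :=
          mul_le_mul_of_nonneg_right hmax hr0
      _ = (n:ℝ) ^ (-(1:ℝ)/5) + D * (Real.log n ^ (3:ℕ) * (n:ℝ) ^ (-(1:ℝ)/5)) := by ring
      _ ≤ 1 := le_of_lt h1
  -- the main eventual bound
  have hkey : ∀ᶠ n : ℕ in atTop, f n ≤ Cst * (Real.log n ^ (13:ℕ) * (n:ℝ) ^ (-(4:ℝ)/5)) := by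
    filter_upwards [eventually_ge_atTop 3, hBev,
      (Real.tendsto_log_atTop.comp tendsto_natCast_atTop_atTop).eventually_ge_atTop 1]
      with n hn3 hB hL
    have hL' : 1 ≤ Real.log n := hL
    set L := Real.log n with hLdef
    set B : ℝ := max 1 (48*c*(K*L)^3) * (n:ℝ) ^ (-(1:ℝ)/5) with hBdef
    have hr0 : (0:ℝ) ≤ (n:ℝ) ^ (-(1:ℝ)/5) := Real.rpow_nonneg (Nat.cast_nonneg n) _
    have hB0 : 0 ≤ B := mul_nonneg (le_trans zero_le_one (le_max_left _ _)) hr0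
    have hn0 : (0:ℝ) < (n:ℝ) := by
      have : (0:ℕ) < n := by omega
      exact_mod_cast this
    have hρle : (ρf n).toReal ≤ 48*c/(n:ℝ)^2 := by
      have h1 : ρf n ≤ ENNReal.ofReal (48*c/(n:ℝ)^2) := min_le_left _ _
      calc (ρf n).toReal ≤ (ENNReal.ofReal (48*c/(n:ℝ)^2)).toReal :=
            ENNReal.toReal_mono ENNReal.ofReal_ne_top h1
        _ = 48*c/(n:ℝ)^2 := ENNReal.toReal_ofReal (by positivity)
    -- per-k bound
    have hks : ∀ k ∈ Finset.Icc 4 ⌊K * L⌋₊,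
        (∑ S ∈ (Finset.univ : Finset (Finset (Fin n))).filter (fun S => S.card = k),
          ((hypMeasure n (ρf n) (min_le_right _ _))
            {ω | (3 * k + 4) / 5 ≤ spanCount S ω}).toReal) ≤ B^4 := by
      intro k hk
      rw [Finset.mem_Icc] at hk
      have hkK : (k:ℝ) ≤ K * L := by
        calc (k:ℝ) ≤ (⌊K * L⌋₊ : ℝ) := by exact_mod_cast hk.2
          _ ≤ K * L := Nat.floor_le (by positivity)
      calc (∑ S ∈ (Finset.univ : Finset (Finset (Fin n))).filter (fun S => S.card = k),
            ((hypMeasure n (ρf n) (min_le_right _ _))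
              {ω | (3 * k + 4) / 5 ≤ spanCount S ω}).toReal)
          ≤ (n:ℝ)^k * (k:ℝ)^(3*((3*k+4)/5)) * (ρf n).toReal^((3*k+4)/5) :=
            ssum_bound n k (ρf n) (min_le_right _ _)
        _ ≤ (n:ℝ)^k * (k:ℝ)^(3*((3*k+4)/5)) * (48*c/(n:ℝ)^2)^((3*k+4)/5) := by
            apply mul_le_mul_of_nonneg_left
              (pow_le_pow_left₀ ENNReal.toReal_nonneg hρle _) (by positivity)
        _ ≤ B^k := perK_bound c K L hc n k hn3 hk.1 hkK
        _ ≤ B^4 := pow_le_pow_of_le_one hB0 hB hk.1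
    have hsum : f n ≤ (Finset.Icc 4 ⌊K * L⌋₊).card • (B^4) :=
      Finset.sum_le_card_nsmul _ _ _ hks
    have hcard : ((Finset.Icc 4 ⌊K * L⌋₊).card : ℝ) ≤ K * L + 1 := by
      rw [Nat.card_Icc]
      have h1 : (⌊K * L⌋₊ : ℝ) ≤ K * L := Nat.floor_le (by positivity)
      have h2 : (⌊K * L⌋₊ + 1 - 4 : ℕ) ≤ ⌊K * L⌋₊ + 1 := by omega
      calc ((⌊K * L⌋₊ + 1 - 4 : ℕ) : ℝ) ≤ ((⌊K * L⌋₊ + 1 : ℕ) : ℝ) := by exact_mod_cast h2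
        _ = (⌊K * L⌋₊ : ℝ) + 1 := by push_cast; ring
        _ ≤ K * L + 1 := by linarith
    have hBle : B ≤ (1 + D) * L^3 * (n:ℝ) ^ (-(1:ℝ)/5) := by
      apply mul_le_mul_of_nonneg_right _ hr0
      have hL3 : (1:ℝ) ≤ L^3 := one_le_pow₀ hL'
      apply max_le
      · nlinarith
      · have : 48*c*(K*L)^3 = D * L^3 := by rw [hD]; ring
        rw [this]; nlinarith
    have hr4 : ((n:ℝ) ^ (-(1:ℝ)/5))^(4:ℕ) = (n:ℝ) ^ (-(4:ℝ)/5) := by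
      rw [← Real.rpow_natCast ((n:ℝ) ^ (-(1:ℝ)/5)) 4, ← Real.rpow_mul hn0.le]
      norm_num
    calc f n ≤ (Finset.Icc 4 ⌊K * L⌋₊).card • (B^4) := hsum
      _ = ((Finset.Icc 4 ⌊K * L⌋₊).card : ℝ) * B^4 := nsmul_eq_mul _ _
      _ ≤ (K * L + 1) * B^4 := mul_le_mul_of_nonneg_right hcard (by positivity)
      _ ≤ ((K + 1) * L) * ((1 + D) * L^3 * (n:ℝ) ^ (-(1:ℝ)/5))^4 := by
          apply mul_le_mul _ (pow_le_pow_left₀ hB0 hBle 4) (by positivity) (by positivity)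
          nlinarith
      _ = Cst * (L ^ (13:ℕ) * (((n:ℝ) ^ (-(1:ℝ)/5))^(4:ℕ))) := by rw [hCst]; ring
      _ = Cst * (L ^ (13:ℕ) * (n:ℝ) ^ (-(4:ℝ)/5)) := by rw [hr4]
  have part1 : Tendsto f atTop (nhds 0) :=
    squeeze_zero' (Eventually.of_forall hf_nonneg) hkey hg
  refine ⟨part1, ?_⟩
  -- part 2 : union bound
  have hle : ∀ n : ℕ,
      ((hypMeasure n (ρf n) (min_le_right _ _))
        {ω | ∃ k ∈ Finset.Icc 4 ⌊K * Real.log n⌋₊, ∃ S : Finset (Fin n),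
          S.card = k ∧ (3 * k + 4) / 5 ≤ spanCount S ω}).toReal ≤ f n := by
    intro n
    set μ := hypMeasure n (ρf n) (min_le_right _ _) with hμ
    have hsub : {ω : {T : Finset (Fin n) // T.card = 3} → Bool |
        ∃ k ∈ Finset.Icc 4 ⌊K * Real.log n⌋₊, ∃ S : Finset (Fin n),
          S.card = k ∧ (3 * k + 4) / 5 ≤ spanCount S ω}
        ⊆ ⋃ k ∈ Finset.Icc 4 ⌊K * Real.log n⌋₊,
            ⋃ S ∈ (Finset.univ : Finset (Finset (Fin n))).filter (fun S => S.card = k),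
              {ω | (3 * k + 4) / 5 ≤ spanCount S ω} := by
      rintro ω ⟨k, hk, S, hS, hcount⟩
      exact Set.mem_biUnion hk
        (Set.mem_biUnion (Finset.mem_filter.mpr ⟨Finset.mem_univ S, hS⟩) hcount)
    have hmeas : μ {ω | ∃ k ∈ Finset.Icc 4 ⌊K * Real.log n⌋₊, ∃ S : Finset (Fin n),
          S.card = k ∧ (3 * k + 4) / 5 ≤ spanCount S ω}
        ≤ ∑ k ∈ Finset.Icc 4 ⌊K * Real.log n⌋₊,
            ∑ S ∈ (Finset.univ : Finset (Finset (Fin n))).filter (fun S => S.card = k),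
              μ {ω | (3 * k + 4) / 5 ≤ spanCount S ω} := by
      calc μ _ ≤ μ (⋃ k ∈ Finset.Icc 4 ⌊K * Real.log n⌋₊,
            ⋃ S ∈ (Finset.univ : Finset (Finset (Fin n))).filter (fun S => S.card = k),
              {ω | (3 * k + 4) / 5 ≤ spanCount S ω}) := measure_mono hsub
        _ ≤ ∑ k ∈ Finset.Icc 4 ⌊K * Real.log n⌋₊,
              μ (⋃ S ∈ (Finset.univ : Finset (Finset (Fin n))).filter (fun S => S.card = k),
                {ω | (3 * k + 4) / 5 ≤ spanCount S ω}) := measure_biUnion_finset_le _ _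
        _ ≤ _ := Finset.sum_le_sum fun k _ => measure_biUnion_finset_le _ _
    have hfin : (∑ k ∈ Finset.Icc 4 ⌊K * Real.log n⌋₊,
        ∑ S ∈ (Finset.univ : Finset (Finset (Fin n))).filter (fun S => S.card = k),
          μ {ω | (3 * k + 4) / 5 ≤ spanCount S ω}) ≠ ⊤ := by
      apply ENNReal.sum_ne_top.mpr
      intro k _
      apply ENNReal.sum_ne_top.mpr
      intro S _
      exact measure_ne_top μ _
    calc (μ {ω | ∃ k ∈ Finset.Icc 4 ⌊K * Real.log n⌋₊, ∃ S : Finset (Fin n),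
          S.card = k ∧ (3 * k + 4) / 5 ≤ spanCount S ω}).toReal
        ≤ (∑ k ∈ Finset.Icc 4 ⌊K * Real.log n⌋₊,
            ∑ S ∈ (Finset.univ : Finset (Finset (Fin n))).filter (fun S => S.card = k),
              μ {ω | (3 * k + 4) / 5 ≤ spanCount S ω}).toReal := ENNReal.toReal_mono hfin hmeas
      _ = f n := by
          rw [hf]
          rw [ENNReal.toReal_sum (fun k _ => ENNReal.sum_ne_top.mpr fun S _ => measure_ne_top μ _)]
          exact Finset.sum_congr rfl fun k _ => ENNReal.toReal_sum fun S _ => measure_ne_top μ _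
  exact squeeze_zero (fun n => ENNReal.toReal_nonneg) hle part1
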